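/- arXiv:1203.4354 — 3 statements merged into one kernel-verified Lean document; each statement's English description precedes it below -/
import Mathlib

section
/- Let ψ : H → ℝ^m be Hadamard differentiable at f_{P,λ_0}, let Λ_n be a Borel-measurable sequence of random regularization parameters, and let ψ'_{D_n,Λ_n} be a measurable estimator of ψ'_{f_{P,λ_0}}. Then the covariance estimator Σ̂_n(D_n,Λ_n) is a measurable map from (Ω,A) to ℝ^{m×m} with its Borel σ-algebra; in particular, ω ↦ f_{D_n(ω),Λ_n(ω)} is measurable and ω ↦ K_{D_n(ω),Λ_n(ω)}^{-1}(Φ(X_i(ω))) is measurable for every i ∈ {1,…,n}. -/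
set_option maxHeartbeats 1000000
set_option synthInstance.maxHeartbeats 400000


open MeasureTheory ProbabilityTheory Filter Topology
open scoped RealInnerProductSpace NNReal ENNReal BigOperators

noncomputable section

/-- The setting of the paper: a regularized kernel method for nonparametric
regression/classification.  `X ⊆ ℝ^d` closed and bounded, `Y ⊆ ℝ` closed, `k` the restriction of
an `r`-times continuously differentiable kernel with `r > d/2`, `H` its RKHS with canonical
feature map `Φ` (so `f(x) = ⟪f, Φ x⟫`), `P` an unknown probability distribution on `X × Y`,
`L` a convex `P`-square-integrable Nemitski loss of order `p` with continuous partial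
derivatives `L'`, `L''` satisfying the envelope conditions, `fP lam` the unique minimizer of the
`lam`-regularized risk, `fD n D lam` the unique minimizer of the `lam`-regularized empirical
risk for the data set `D`, and `Z 0, Z 1, …` an i.i.d. sequence with distribution `P` on a
probability space `(Ω, 𝓐, Q)`. -/
structure RegKernelSetting (d : ℕ) (H : Type) [NormedAddCommGroup H]
    [InnerProductSpace ℝ H] [CompleteSpace H] (Ω : Type) [MeasurableSpace Ω] where
  X : Set (EuclideanSpace ℝ (Fin d))
  Y : Set ℝ
  hXclosed : IsClosed X
  hXbdd : Bornology.IsBounded X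
  hYclosed : IsClosed Y
  /-- differentiability order of the kernel -/
  r : ℕ
  hr : (d : ℝ) / 2 < r
  /-- the kernel on `ℝ^d × ℝ^d`, whose restriction to `X × X` is the kernel `k` of the RKHS -/
  ktilde : EuclideanSpace ℝ (Fin d) → EuclideanSpace ℝ (Fin d) → ℝ
  hksmooth : ContDiff ℝ r (Function.uncurry ktilde)
  /-- `k ≠ 0` -/
  hkne : ∃ x x' : X, ktilde x x' ≠ 0
  /-- the canonical feature map of the RKHS `H` -/
  Φ : X → H
  /-- reproducing kernel: `k (x, x') = ⟪Φ x, Φ x'⟫` -/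
  hfeature : ∀ x x' : X, ktilde x x' = ⟪Φ x, Φ x'⟫
  /-- `H` is generated by the kernel `k` -/
  hgen : (Submodule.span ℝ (Set.range Φ)).topologicalClosure = ⊤
  P : Measure (X × Y)
  hP : IsProbabilityMeasure P
  /-- the loss function -/
  L : X → Y → ℝ → ℝ
  hLnonneg : ∀ x y t, 0 ≤ L x y t
  hLconvex : ∀ x y, ConvexOn ℝ Set.univ (L x y)
  /-- order of the Nemitski loss -/
  p : ℝ
  hp : 1 ≤ p
  b : X × Y → ℝ
  c : ℝ
  hc : 0 < c
  hbL2 : MemLp b 2 P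
  /-- `L` is a `P`-square-integrable Nemitski loss of order `p` -/
  hNemitski : ∀ x y t, L x y t ≤ b (x, y) + c * |t| ^ p
  /-- first partial derivative of the loss w.r.t. `t` -/
  L' : X → Y → ℝ → ℝ
  /-- second partial derivative of the loss w.r.t. `t` -/
  L'' : X → Y → ℝ → ℝ
  hL' : ∀ x y t, HasDerivAt (L x y) (L' x y t) t
  hL'' : ∀ x y t, HasDerivAt (L' x y) (L'' x y t) t
  hL'cont : Continuous fun q : (X × Y) × ℝ => L' q.1.1 q.1.2 q.2
  hL''cont : Continuous fun q : (X × Y) × ℝ => L'' q.1.1 q.1.2 q.2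
  b' : ℝ → X × Y → ℝ
  hb'L2 : ∀ a : ℝ, 0 < a → MemLp (b' a) 2 P
  hb'bound : ∀ a : ℝ, 0 < a → ∀ (x : X) (y : Y) (t : ℝ), |t| ≤ a → |L' x y t| ≤ b' a (x, y)
  b'' : ℝ → ℝ
  hb''bound : ∀ a : ℝ, 0 < a → ∀ (x : X) (y : Y) (t : ℝ), |t| ≤ a → |L'' x y t| ≤ b'' a
  /-- `fP lam` is the minimizer of the `lam`-regularized risk in `H` -/
  fP : ℝ → H
  hfPmin : ∀ lam : ℝ, 0 < lam → ∀ g : H,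
      (∫ (z : X × Y), L z.1 z.2 ⟪fP lam, Φ z.1⟫ ∂P) + lam * ‖fP lam‖ ^ 2 ≤
      (∫ (z : X × Y), L z.1 z.2 ⟪g, Φ z.1⟫ ∂P) + lam * ‖g‖ ^ 2
  hfPuniq : ∀ lam : ℝ, 0 < lam → ∀ g : H,
      (∫ (z : X × Y), L z.1 z.2 ⟪g, Φ z.1⟫ ∂P) + lam * ‖g‖ ^ 2 ≤
      (∫ (z : X × Y), L z.1 z.2 ⟪fP lam, Φ z.1⟫ ∂P) + lam * ‖fP lam‖ ^ 2 → g = fP lam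
  /-- `fD n D lam` is the minimizer of the `lam`-regularized empirical risk for data `D` -/
  fD : (n : ℕ) → (Fin n → X × Y) → ℝ → H
  hfDmin : ∀ (n : ℕ) (D : Fin n → X × Y) (lam : ℝ), 0 < lam → ∀ g : H,
      ((n : ℝ)⁻¹ * ∑ i, L (D i).1 (D i).2 ⟪fD n D lam, Φ (D i).1⟫) + lam * ‖fD n D lam‖ ^ 2 ≤
      ((n : ℝ)⁻¹ * ∑ i, L (D i).1 (D i).2 ⟪g, Φ (D i).1⟫) + lam * ‖g‖ ^ 2
  hfDuniq : ∀ (n : ℕ) (D : Fin n → X × Y) (lam : ℝ), 0 < lam → ∀ g : H,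
      ((n : ℝ)⁻¹ * ∑ i, L (D i).1 (D i).2 ⟪g, Φ (D i).1⟫) + lam * ‖g‖ ^ 2 ≤
      ((n : ℝ)⁻¹ * ∑ i, L (D i).1 (D i).2 ⟪fD n D lam, Φ (D i).1⟫) +
        lam * ‖fD n D lam‖ ^ 2 → g = fD n D lam
  Q : Measure Ω
  hQ : IsProbabilityMeasure Q
  /-- the i.i.d. data `(X_1,Y_1), (X_2,Y_2), …` -/
  Z : ℕ → Ω → X × Y
  hZmeas : ∀ i, Measurable (Z i)
  hZlaw : ∀ i, Measure.map (Z i) Q = P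
  hZindep : iIndepFun Z Q

variable {d : ℕ} {H : Type} [NormedAddCommGroup H] [InnerProductSpace ℝ H] [CompleteSpace H]
  {Ω : Type} [MeasurableSpace Ω]

/-- the estimator `f_{D_n, Λ_n}` based on the first `n` data points and the (random)
regularization parameter `Λ_n` -/
def RegKernelSetting.fDhat (S : RegKernelSetting d H Ω) (Lam : ℕ → Ω → ℝ) (n : ℕ) (ω : Ω) : H :=
  S.fD n (fun i : Fin n => S.Z i ω) (Lam n ω)

/-- convergence in distribution (weak convergence) of a sequence of random elements to a
probability measure -/
def TendstoInDistribution {α : Type*} [TopologicalSpace α] [MeasurableSpace α]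
    (Q : Measure Ω) (W : ℕ → Ω → α) (μ : Measure α) : Prop :=
  ∀ g : BoundedContinuousFunction α ℝ,
    Tendsto (fun n => ∫ ω, g (W n ω) ∂Q) atTop (𝓝 (∫ x, g x ∂μ))

/-- `ψ : H → ℝ^m` is Hadamard differentiable at `f0` with derivative `ψ' ∈ H^m`. -/
def HadamardDiffAt {H : Type} [NormedAddCommGroup H] [InnerProductSpace ℝ H]
    {m : ℕ} (ψ : H → (Fin m → ℝ)) (f0 : H) (ψ' : Fin m → H) : Prop :=
  ∀ (t : ℕ → ℝ) (hs : ℕ → H) (h : H),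
    (∀ ℓ, 0 < t ℓ) → Tendsto t atTop (𝓝 0) → Tendsto hs atTop (𝓝 h) →
    Tendsto (fun ℓ => (t ℓ)⁻¹ • (ψ (f0 + t ℓ • hs ℓ) - ψ f0)) atTop
      (𝓝 fun j => ⟪ψ' j, h⟫)

/-- the random operator `K_{D_n,Λ_n} : H → H`,
`f ↦ 2Λ_n f + (1/n) ∑ᵢ L''(Xᵢ,Yᵢ,f_{D_n,Λ_n}(Xᵢ)) f(Xᵢ) Φ(Xᵢ)` -/
def RegKernelSetting.KD (S : RegKernelSetting d H Ω) (n : ℕ) (D : Fin n → S.X × S.Y)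
    (lam : ℝ) (f : H) : H :=
  (2 * lam) • f + (n : ℝ)⁻¹ •
    ∑ i, (S.L'' (D i).1 (D i).2 ⟪S.fD n D lam, S.Φ (D i).1⟫ * ⟪f, S.Φ (D i).1⟫) • S.Φ (D i).1

/-- the random function `g_{D_n,Λ_n}(x,y)
  = −L'(x,y,f_{D_n,Λ_n}(x)) ⋅ (⟪ψ'_{D_n,Λ_n,j}, K_{D_n,Λ_n}⁻¹(Φ(x))⟫)_{j=1,…,m}` -/
def gHat (S : RegKernelSetting d H Ω) (Lam : ℕ → Ω → ℝ)
    (KDinv : (n : ℕ) → (Fin n → S.X × S.Y) → ℝ → H → H)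
    {m : ℕ} (ψest : ℕ → Ω → Fin m → H) (n : ℕ) (ω : Ω) (z : S.X × S.Y) (j : Fin m) : ℝ :=
  -(S.L' z.1 z.2 ⟪S.fD n (fun i => S.Z i ω) (Lam n ω), S.Φ z.1⟫) *
    ⟪ψest n ω j, KDinv n (fun i => S.Z i ω) (Lam n ω) (S.Φ z.1)⟫

/-- the covariance estimator `Σ̂_n(D_n,Λ_n) = (1/n) ∑ᵢ g̃ᵢ g̃ᵢᵀ` where
`g̃ᵢ = g_{D_n,Λ_n}(Xᵢ,Yᵢ) − (1/n) ∑_j g_{D_n,Λ_n}(X_j,Y_j)` -/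
def sigmaHat (S : RegKernelSetting d H Ω) (Lam : ℕ → Ω → ℝ)
    (KDinv : (n : ℕ) → (Fin n → S.X × S.Y) → ℝ → H → H)
    {m : ℕ} (ψest : ℕ → Ω → Fin m → H) (n : ℕ) (ω : Ω) (j j' : Fin m) : ℝ :=
  (n : ℝ)⁻¹ * ∑ i : Fin n,
    (gHat S Lam KDinv ψest n ω (S.Z i ω) j -
      (n : ℝ)⁻¹ * ∑ i' : Fin n, gHat S Lam KDinv ψest n ω (S.Z i' ω) j) *
    (gHat S Lam KDinv ψest n ω (S.Z i ω) j' -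
      (n : ℝ)⁻¹ * ∑ i' : Fin n, gHat S Lam KDinv ψest n ω (S.Z i' ω) j')

section AuxLemmas

variable (S : RegKernelSetting d H Ω)

/-- The canonical feature map is continuous. -/
lemma RegKernelSetting.phi_cont : Continuous S.Φ := by
  have hk : Continuous fun p : S.X × S.X => S.ktilde p.1 p.2 := by
    have := S.hksmooth.continuous
    exact this.comp ((continuous_subtype_val.comp continuous_fst).prodMk
      (continuous_subtype_val.comp continuous_snd))
  rw [continuous_iff_continuousAt]
  intro x
  rw [ContinuousAt, tendsto_iff_norm_sub_tendsto_zero]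
  have h1 : Tendsto (fun x' : S.X => ‖S.Φ x' - S.Φ x‖ ^ 2) (𝓝 x) (𝓝 0) := by
    have heq : ∀ x' : S.X, ‖S.Φ x' - S.Φ x‖ ^ 2
        = S.ktilde x' x' - 2 * S.ktilde x' x + S.ktilde x x := by
      intro x'
      rw [norm_sub_sq_real, ← real_inner_self_eq_norm_sq, ← real_inner_self_eq_norm_sq,
        ← S.hfeature, ← S.hfeature, ← S.hfeature]
    simp_rw [heq]
    have hc : Tendsto (fun x' : S.X => S.ktilde x' x' - 2 * S.ktilde x' x + S.ktilde x x)
        (𝓝 x) (𝓝 (S.ktilde x x - 2 * S.ktilde x x + S.ktilde x x)) := by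
      have c1 : Continuous fun x' : S.X => S.ktilde x' x' :=
        hk.comp (continuous_id.prodMk continuous_id)
      have c2 : Continuous fun x' : S.X => S.ktilde x' x :=
        hk.comp (continuous_id.prodMk continuous_const)
      exact ((c1.sub (continuous_const.mul c2)).add continuous_const).tendsto x
    have : S.ktilde x x - 2 * S.ktilde x x + S.ktilde x x = 0 := by ring
    rwa [this] at hc
  have h2 : Tendsto (fun x' : S.X => ‖S.Φ x' - S.Φ x‖) (𝓝 x) (𝓝 0) := by
    have := (Real.continuous_sqrt.tendsto 0).comp h1
    simp only [Real.sqrt_zero, Function.comp_def] at this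
    convert this using 2 with x'
    rw [Real.sqrt_sq (norm_nonneg _)]
  exact h2

/-- The derivative of the loss is monotone (convexity). -/
lemma RegKernelSetting.L'_mono (x : S.X) (y : S.Y) : Monotone (S.L' x y) := by
  intro s t hst
  rcases eq_or_lt_of_le hst with rfl | h
  · exact le_rfl
  · have h1 := (S.hLconvex x y).le_slope_of_hasDerivAt (Set.mem_univ s) (Set.mem_univ t) h
      (S.hL' x y s)
    have h2 := (S.hLconvex x y).slope_le_of_hasDerivAt (Set.mem_univ s) (Set.mem_univ t) h
      (S.hL' x y t)
    exact h1.trans h2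

/-- The second derivative of the loss is nonnegative (convexity). -/
lemma RegKernelSetting.L''_nonneg (x : S.X) (y : S.Y) (t : ℝ) : 0 ≤ S.L'' x y t := by
  have h := hasDerivAt_iff_tendsto_slope.mp (S.hL'' x y t)
  refine ge_of_tendsto h (Filter.eventually_of_mem self_mem_nhdsWithin fun u hu => ?_)
  have hm := S.L'_mono x y
  have hu' : u ≠ t := hu
  rw [slope_def_field]
  rcases lt_or_gt_of_ne hu' with h1 | h1
  · exact div_nonneg_iff.2 (Or.inr ⟨sub_nonpos.2 (hm h1.le), sub_nonpos.2 h1.le⟩)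
  · exact div_nonneg (sub_nonneg.2 (hm h1.le)) (sub_nonneg.2 h1.le)

/-- The gradient of the regularized empirical risk. -/
def RegKernelSetting.gradF (n : ℕ) (D : Fin n → S.X × S.Y) (lam : ℝ) (g : H) : H :=
  (2 * lam) • g + (n : ℝ)⁻¹ •
    ∑ i, (S.L' (D i).1 (D i).2 ⟪g, S.Φ (D i).1⟫) • S.Φ (D i).1

lemma RegKernelSetting.inner_gradF (n : ℕ) (D : Fin n → S.X × S.Y) (lam : ℝ) (g h : H) :
    ⟪S.gradF n D lam g, h⟫ = 2 * lam * ⟪g, h⟫ +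
      (n : ℝ)⁻¹ * ∑ i, S.L' (D i).1 (D i).2 ⟪g, S.Φ (D i).1⟫ * ⟪S.Φ (D i).1, h⟫ := by
  simp [RegKernelSetting.gradF, inner_add_left, real_inner_smul_left, sum_inner]

lemma RegKernelSetting.gradF_cont (n : ℕ) :
    Continuous fun p : (Fin n → S.X × S.Y) × ℝ × H => S.gradF n p.1 p.2.1 p.2.2 := by
  unfold RegKernelSetting.gradF
  have hΦ : ∀ i : Fin n, Continuous fun p : (Fin n → S.X × S.Y) × ℝ × H =>
      S.Φ (p.1 i).1 := fun i =>
    S.phi_cont.comp (((continuous_apply i).comp continuous_fst).fst)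
  refine Continuous.add ?_ ?_
  · exact ((continuous_const.mul (continuous_fst.comp continuous_snd)).smul
      (continuous_snd.comp continuous_snd))
  · refine Continuous.smul continuous_const ?_
    refine continuous_finset_sum _ fun i _ => Continuous.smul ?_ (hΦ i)
    exact S.hL'cont.comp (((continuous_apply i).comp continuous_fst).prodMk
      (((continuous_snd.comp continuous_snd)).inner (hΦ i)))

lemma RegKernelSetting.gradF_sub_inner (n : ℕ) (D : Fin n → S.X × S.Y) (lam : ℝ) (g₁ g₂ : H) :
    ⟪S.gradF n D lam g₁ - S.gradF n D lam g₂, g₁ - g₂⟫ =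
      2 * lam * ‖g₁ - g₂‖ ^ 2 + (n : ℝ)⁻¹ * ∑ i,
        (S.L' (D i).1 (D i).2 ⟪g₁, S.Φ (D i).1⟫ - S.L' (D i).1 (D i).2 ⟪g₂, S.Φ (D i).1⟫) *
          (⟪g₁, S.Φ (D i).1⟫ - ⟪g₂, S.Φ (D i).1⟫) := by
  rw [inner_sub_left, S.inner_gradF, S.inner_gradF]
  have h1 : ⟪g₁, g₁ - g₂⟫ - ⟪g₂, g₁ - g₂⟫ = ‖g₁ - g₂‖ ^ 2 := by
    rw [← inner_sub_left, real_inner_self_eq_norm_sq]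
  have h2 : ∀ i : Fin n, ⟪S.Φ (D i).1, g₁ - g₂⟫ =
      ⟪g₁, S.Φ (D i).1⟫ - ⟪g₂, S.Φ (D i).1⟫ := fun i => by
    rw [real_inner_comm, inner_sub_left]
  simp_rw [h2, sub_mul, Finset.sum_sub_distrib]
  rw [← h1]
  ring

lemma RegKernelSetting.gradF_strongMono (n : ℕ) (D : Fin n → S.X × S.Y) (lam : ℝ) (g₁ g₂ : H) :
    2 * lam * ‖g₁ - g₂‖ ^ 2 ≤ ⟪S.gradF n D lam g₁ - S.gradF n D lam g₂, g₁ - g₂⟫ := by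
  rw [S.gradF_sub_inner]
  refine le_add_of_nonneg_right (mul_nonneg (by positivity) (Finset.sum_nonneg fun i _ => ?_))
  rcases le_total (⟪g₁, S.Φ (D i).1⟫ : ℝ) ⟪g₂, S.Φ (D i).1⟫ with hab | hab
  · exact mul_nonneg_iff.2 (Or.inr ⟨sub_nonpos.2 (S.L'_mono (D i).1 (D i).2 hab),
      sub_nonpos.2 hab⟩)
  · exact mul_nonneg (sub_nonneg.2 (S.L'_mono (D i).1 (D i).2 hab)) (sub_nonneg.2 hab)

/-- First-order optimality condition for the empirical minimizer. -/
lemma RegKernelSetting.gradF_fD_eq_zero (n : ℕ) (D : Fin n → S.X × S.Y) (lam : ℝ)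
    (hlam : 0 < lam) : S.gradF n D lam (S.fD n D lam) = 0 := by
  set f := S.fD n D lam with hf
  have key : ∀ h : H, ⟪S.gradF n D lam f, h⟫ = 0 := by
    intro h
    set φ : ℝ → ℝ := fun t =>
      ((n : ℝ)⁻¹ * ∑ i, S.L (D i).1 (D i).2 (⟪f, S.Φ (D i).1⟫ + t * ⟪h, S.Φ (D i).1⟫)) +
        lam * (‖f‖ ^ 2 + 2 * ⟪f, h⟫ * t + ‖h‖ ^ 2 * t ^ 2) with hφ
    have hφeq : ∀ t : ℝ,
        φ t = ((n : ℝ)⁻¹ * ∑ i, S.L (D i).1 (D i).2 ⟪f + t • h, S.Φ (D i).1⟫) +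
          lam * ‖f + t • h‖ ^ 2 := by
      intro t
      have e1 : ∀ i : Fin n, ⟪f + t • h, S.Φ (D i).1⟫ =
          ⟪f, S.Φ (D i).1⟫ + t * ⟪h, S.Φ (D i).1⟫ := fun i => by
        rw [inner_add_left, real_inner_smul_left]
      have e2 : ‖f + t • h‖ ^ 2 = ‖f‖ ^ 2 + 2 * ⟪f, h⟫ * t + ‖h‖ ^ 2 * t ^ 2 := by
        rw [norm_add_sq_real, real_inner_smul_right, norm_smul]
        simp only [Real.norm_eq_abs, mul_pow, sq_abs]
        ring
      simp_rw [hφ, e1, e2]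
    -- φ has a local minimum at 0
    have hmin : IsLocalMin φ 0 := by
      refine Filter.Eventually.of_forall fun t => ?_
      rw [hφeq, hφeq]
      have h0 : f + (0 : ℝ) • h = f := by simp
      rw [h0]
      exact S.hfDmin n D lam hlam (f + t • h)
    -- φ is differentiable at 0 with derivative ⟪gradF f, h⟫
    have hderiv : HasDerivAt φ
        (((n : ℝ)⁻¹ * ∑ i, S.L' (D i).1 (D i).2 ⟪f, S.Φ (D i).1⟫ * ⟪h, S.Φ (D i).1⟫) +
          lam * (2 * ⟪f, h⟫)) 0 := by
      have hsum : HasDerivAt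
          (fun t : ℝ => ∑ i, S.L (D i).1 (D i).2 (⟪f, S.Φ (D i).1⟫ + t * ⟪h, S.Φ (D i).1⟫))
          (∑ i, S.L' (D i).1 (D i).2 ⟪f, S.Φ (D i).1⟫ * ⟪h, S.Φ (D i).1⟫) 0 := by
        refine HasDerivAt.fun_sum fun i _ => ?_
        have hm : HasDerivAt (fun t : ℝ => ⟪f, S.Φ (D i).1⟫ + t * ⟪h, S.Φ (D i).1⟫)
            ⟪h, S.Φ (D i).1⟫ 0 := by
          simpa using ((hasDerivAt_id (0 : ℝ)).mul_const ⟪h, S.Φ (D i).1⟫).const_add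
            (⟪f, S.Φ (D i).1⟫ : ℝ)
        have := (S.hL' (D i).1 (D i).2 (⟪f, S.Φ (D i).1⟫ + 0 * ⟪h, S.Φ (D i).1⟫)).comp
          (0 : ℝ) hm
        simpa [Function.comp_def] using this
      have hq : HasDerivAt (fun t : ℝ => ‖f‖ ^ 2 + 2 * ⟪f, h⟫ * t + ‖h‖ ^ 2 * t ^ 2)
          (2 * ⟪f, h⟫) 0 := by
        have hlin : HasDerivAt (fun t : ℝ => 2 * ⟪f, h⟫ * t) (2 * ⟪f, h⟫) 0 := by
          simpa using (hasDerivAt_id (0 : ℝ)).const_mul (2 * ⟪f, h⟫ : ℝ)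
        have hsq : HasDerivAt (fun t : ℝ => ‖h‖ ^ 2 * t ^ 2) 0 0 := by
          simpa using (hasDerivAt_pow 2 (0 : ℝ)).const_mul (‖h‖ ^ 2 : ℝ)
        simpa using (hlin.const_add (‖f‖ ^ 2 : ℝ)).fun_add hsq
      exact (hsum.const_mul ((n : ℝ)⁻¹)).add (hq.const_mul lam)
    have hzero := hmin.hasDerivAt_eq_zero hderiv
    rw [S.inner_gradF]
    have hcomm : ∀ i : Fin n, (⟪S.Φ (D i).1, h⟫ : ℝ) = ⟪h, S.Φ (D i).1⟫ := fun i =>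
      real_inner_comm _ _
    simp_rw [hcomm]
    linarith [hzero]
  have := key (S.gradF n D lam f)
  exact inner_self_eq_zero.mp this

/-- From the strong monotonicity inequality, a norm bound. -/
lemma norm_le_of_strong {lam C t : ℝ} (hlam : 0 < lam) (hC : 0 ≤ C)
    (h : 2 * lam * t ^ 2 ≤ C * t) (ht : 0 ≤ t) : t ≤ C / (2 * lam) := by
  rcases eq_or_lt_of_le ht with h0 | h0
  · rw [← h0]; positivity
  · rw [le_div_iff₀ (by positivity)]
    exact le_of_mul_le_mul_right (by nlinarith) h0

/-- Continuity of the empirical minimizer in the data and the regularization parameter. -/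
lemma RegKernelSetting.fD_cont (n : ℕ) :
    Continuous fun p : (Fin n → S.X × S.Y) × {l : ℝ // 0 < l} => S.fD n p.1 p.2.1 := by
  rw [continuous_iff_continuousAt]
  intro p₀
  have hlam₀ : (0 : ℝ) < p₀.2.1 := p₀.2.2
  set f₀ := S.fD n p₀.1 p₀.2.1 with hf₀
  rw [ContinuousAt, tendsto_iff_norm_sub_tendsto_zero]
  have hbound : ∀ p : (Fin n → S.X × S.Y) × {l : ℝ // 0 < l},
      ‖S.fD n p.1 p.2.1 - f₀‖ ≤ ‖S.gradF n p.1 p.2.1 f₀‖ / (2 * p.2.1) := by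
    intro p
    have hlam : (0 : ℝ) < p.2.1 := p.2.2
    have h1 := S.gradF_strongMono n p.1 p.2.1 (S.fD n p.1 p.2.1) f₀
    rw [S.gradF_fD_eq_zero n p.1 p.2.1 hlam] at h1
    have h2 : ⟪(0 : H) - S.gradF n p.1 p.2.1 f₀, S.fD n p.1 p.2.1 - f₀⟫ ≤
        ‖S.gradF n p.1 p.2.1 f₀‖ * ‖S.fD n p.1 p.2.1 - f₀‖ := by
      calc ⟪(0 : H) - S.gradF n p.1 p.2.1 f₀, S.fD n p.1 p.2.1 - f₀⟫
          ≤ ‖(0 : H) - S.gradF n p.1 p.2.1 f₀‖ * ‖S.fD n p.1 p.2.1 - f₀‖ :=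
            real_inner_le_norm _ _
        _ = ‖S.gradF n p.1 p.2.1 f₀‖ * ‖S.fD n p.1 p.2.1 - f₀‖ := by
            rw [zero_sub, norm_neg]
    exact norm_le_of_strong hlam (norm_nonneg _) (h1.trans h2) (norm_nonneg _)
  refine squeeze_zero (fun p => norm_nonneg _) hbound ?_
  have hcont : Tendsto
      (fun p : (Fin n → S.X × S.Y) × {l : ℝ // 0 < l} =>
        ‖S.gradF n p.1 p.2.1 f₀‖ / (2 * p.2.1)) (𝓝 p₀)
      (𝓝 (‖S.gradF n p₀.1 p₀.2.1 f₀‖ / (2 * p₀.2.1))) := by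
    refine Tendsto.div ?_ ?_ (by positivity)
    · have hc : Continuous fun p : (Fin n → S.X × S.Y) × {l : ℝ // 0 < l} =>
          S.gradF n p.1 p.2.1 f₀ :=
        (S.gradF_cont n).comp (continuous_fst.prodMk
          ((continuous_subtype_val.comp continuous_snd).prodMk continuous_const))
      exact (hc.norm.tendsto p₀)
    · exact ((continuous_const.mul (continuous_subtype_val.comp continuous_snd)).tendsto p₀)
  have hval : ‖S.gradF n p₀.1 p₀.2.1 f₀‖ / (2 * p₀.2.1) = 0 := by
    rw [hf₀, S.gradF_fD_eq_zero n p₀.1 p₀.2.1 hlam₀, norm_zero, zero_div]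
  rwa [hval] at hcont

lemma RegKernelSetting.KD_inner (n : ℕ) (D : Fin n → S.X × S.Y) (lam : ℝ) (f v : H) :
    ⟪S.KD n D lam f, v⟫ = 2 * lam * ⟪f, v⟫ + (n : ℝ)⁻¹ *
      ∑ i, S.L'' (D i).1 (D i).2 ⟪S.fD n D lam, S.Φ (D i).1⟫ * ⟪f, S.Φ (D i).1⟫ *
        ⟪S.Φ (D i).1, v⟫ := by
  simp [RegKernelSetting.KD, inner_add_left, real_inner_smul_left, sum_inner, mul_assoc]

lemma RegKernelSetting.KD_sub (n : ℕ) (D : Fin n → S.X × S.Y) (lam : ℝ) (f g : H) :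
    S.KD n D lam f - S.KD n D lam g = S.KD n D lam (f - g) := by
  simp only [RegKernelSetting.KD, inner_sub_left, mul_sub, sub_smul, smul_sub,
    Finset.sum_sub_distrib]
  abel

lemma RegKernelSetting.KD_coercive (n : ℕ) (D : Fin n → S.X × S.Y) (lam : ℝ) (v : H) :
    2 * lam * ‖v‖ ^ 2 ≤ ⟪S.KD n D lam v, v⟫ := by
  rw [S.KD_inner]
  rw [real_inner_self_eq_norm_sq]
  refine le_add_of_nonneg_right (mul_nonneg (by positivity)
    (Finset.sum_nonneg fun i _ => ?_))
  have hcomm : (⟪S.Φ (D i).1, v⟫ : ℝ) = ⟪v, S.Φ (D i).1⟫ := real_inner_comm _ _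
  rw [mul_assoc, hcomm, ← sq]
  exact mul_nonneg (S.L''_nonneg _ _ _) (sq_nonneg _)

lemma RegKernelSetting.KD_cont (n : ℕ) :
    Continuous fun p : ((Fin n → S.X × S.Y) × {l : ℝ // 0 < l}) × H =>
      S.KD n p.1.1 p.1.2.1 p.2 := by
  unfold RegKernelSetting.KD
  have hΦ : ∀ i : Fin n, Continuous fun p : ((Fin n → S.X × S.Y) × {l : ℝ // 0 < l}) × H =>
      S.Φ (p.1.1 i).1 := fun i =>
    S.phi_cont.comp (((continuous_apply i).comp continuous_fst.fst).fst)
  have hfDc : Continuous fun p : ((Fin n → S.X × S.Y) × {l : ℝ // 0 < l}) × H =>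
      S.fD n p.1.1 p.1.2.1 := (S.fD_cont n).comp continuous_fst
  refine Continuous.add ?_ ?_
  · exact (continuous_const.mul (continuous_subtype_val.comp continuous_fst.snd)).smul
      continuous_snd
  · refine Continuous.smul continuous_const ?_
    refine continuous_finset_sum _ fun i _ => Continuous.smul ?_ (hΦ i)
    refine Continuous.mul ?_ (continuous_snd.inner (hΦ i))
    exact S.hL''cont.comp (((continuous_apply i).comp continuous_fst.fst).prodMk
      (hfDc.inner (hΦ i)))


lemma RegKernelSetting.KDinv_cont (n : ℕ)
    (KDinv : (n : ℕ) → (Fin n → S.X × S.Y) → ℝ → H → H)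
    (hKDinv : ∀ (n : ℕ) (D : Fin n → S.X × S.Y) (lam : ℝ), 0 < lam →
      (∀ f, KDinv n D lam (S.KD n D lam f) = f) ∧ (∀ f, S.KD n D lam (KDinv n D lam f) = f)) :
    Continuous fun p : ((Fin n → S.X × S.Y) × {l : ℝ // 0 < l}) × H =>
      KDinv n p.1.1 p.1.2.1 p.2 := by
  rw [continuous_iff_continuousAt]
  intro p₀
  have hlam₀ : (0 : ℝ) < p₀.1.2.1 := p₀.1.2.2
  set u₀ := KDinv n p₀.1.1 p₀.1.2.1 p₀.2 with hu₀
  rw [ContinuousAt, tendsto_iff_norm_sub_tendsto_zero]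
  have hbound : ∀ p : ((Fin n → S.X × S.Y) × {l : ℝ // 0 < l}) × H,
      ‖KDinv n p.1.1 p.1.2.1 p.2 - u₀‖ ≤ ‖p.2 - S.KD n p.1.1 p.1.2.1 u₀‖ / (2 * p.1.2.1) := by
    intro p
    have hlam : (0 : ℝ) < p.1.2.1 := p.1.2.2
    have h1 := S.KD_coercive n p.1.1 p.1.2.1 (KDinv n p.1.1 p.1.2.1 p.2 - u₀)
    have h2 : S.KD n p.1.1 p.1.2.1 (KDinv n p.1.1 p.1.2.1 p.2 - u₀) =
        p.2 - S.KD n p.1.1 p.1.2.1 u₀ := by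
      rw [← S.KD_sub, (hKDinv n p.1.1 p.1.2.1 hlam).2 p.2]
    rw [h2] at h1
    have h3 : ⟪p.2 - S.KD n p.1.1 p.1.2.1 u₀, KDinv n p.1.1 p.1.2.1 p.2 - u₀⟫ ≤
        ‖p.2 - S.KD n p.1.1 p.1.2.1 u₀‖ * ‖KDinv n p.1.1 p.1.2.1 p.2 - u₀‖ :=
      real_inner_le_norm _ _
    exact norm_le_of_strong hlam (norm_nonneg _) (h1.trans h3) (norm_nonneg _)
  refine squeeze_zero (fun p => norm_nonneg _) hbound ?_
  have hcont : Tendsto (fun p : ((Fin n → S.X × S.Y) × {l : ℝ // 0 < l}) × H =>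
      ‖p.2 - S.KD n p.1.1 p.1.2.1 u₀‖ / (2 * p.1.2.1)) (𝓝 p₀)
      (𝓝 (‖p₀.2 - S.KD n p₀.1.1 p₀.1.2.1 u₀‖ / (2 * p₀.1.2.1))) := by
    refine Tendsto.div ?_ ?_ (by positivity)
    · have hc : Continuous fun p : ((Fin n → S.X × S.Y) × {l : ℝ // 0 < l}) × H =>
          p.2 - S.KD n p.1.1 p.1.2.1 u₀ :=
        continuous_snd.sub ((S.KD_cont n).comp (continuous_fst.prodMk continuous_const))
      exact hc.norm.tendsto p₀
    · exact ((continuous_const.mul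
        (continuous_subtype_val.comp (continuous_snd.comp continuous_fst))).tendsto p₀)
  have hKu : S.KD n p₀.1.1 p₀.1.2.1 u₀ = p₀.2 := (hKDinv n p₀.1.1 p₀.1.2.1 hlam₀).2 p₀.2
  have hval : ‖p₀.2 - S.KD n p₀.1.1 p₀.1.2.1 u₀‖ / (2 * p₀.1.2.1) = 0 := by
    rw [hKu, sub_self, norm_zero, zero_div]
  rwa [hval] at hcont

end AuxLemmas


/-- measurability of the covariance estimator.  Given a Hadamard
differentiable `ψ`, Borel-measurable random regularization parameters `Λ_n`, and a measurable
estimator `ψ'_{D_n,Λ_n}` of the derivative, the covariance estimator `Σ̂_n(D_n,Λ_n)` is a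
measurable map into `ℝ^{m×m}`; in particular `ω ↦ f_{D_n(ω),Λ_n(ω)}` and
`ω ↦ K_{D_n(ω),Λ_n(ω)}⁻¹(Φ(Xᵢ(ω)))` are measurable. -/
theorem covariance_estimator_measurable
    [MeasurableSpace H] [BorelSpace H]
    (S : RegKernelSetting d H Ω) (lam0 : ℝ) (hlam0 : 0 < lam0)
    {m : ℕ} (ψ : H → (Fin m → ℝ)) (ψ' : Fin m → H)
    (hψ : HadamardDiffAt ψ (S.fP lam0) ψ')
    (Lam : ℕ → Ω → ℝ) (hLam : ∀ n, Measurable (Lam n)) (hLampos : ∀ n ω, 0 < Lam n ω)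
    (ψest : ℕ → Ω → Fin m → H) (hψest : ∀ n, Measurable (ψest n))
    (KDinv : (n : ℕ) → (Fin n → S.X × S.Y) → ℝ → H → H)
    (hKDinv : ∀ (n : ℕ) (D : Fin n → S.X × S.Y) (lam : ℝ), 0 < lam →
      (∀ f, KDinv n D lam (S.KD n D lam f) = f) ∧ (∀ f, S.KD n D lam (KDinv n D lam f) = f)) :
    (∀ n : ℕ, Measurable fun ω => S.fD n (fun i => S.Z i ω) (Lam n ω)) ∧
    (∀ (n : ℕ) (i : Fin n), Measurable fun ω =>
        KDinv n (fun i' => S.Z i' ω) (Lam n ω) (S.Φ (S.Z i ω).1)) ∧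
    (∀ n : ℕ, Measurable fun ω => fun j j' : Fin m =>
        sigmaHat S Lam KDinv ψest n ω j j') := by
  -- `H` is separable, hence second countable
  haveI : TopologicalSpace.SeparableSpace H := by
    have hsep : TopologicalSpace.IsSeparable (Set.range S.Φ) :=
      TopologicalSpace.isSeparable_range S.phi_cont
    have hsep2 : TopologicalSpace.IsSeparable
        ((Submodule.span ℝ (Set.range S.Φ) : Submodule ℝ H) : Set H) := hsep.span
    have hsep3 := hsep2.closure
    have huniv : (Set.univ : Set H) ⊆
        closure ((Submodule.span ℝ (Set.range S.Φ) : Submodule ℝ H) : Set H) := by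
      rw [← Submodule.topologicalClosure_coe, S.hgen]
      simp
    exact TopologicalSpace.isSeparable_univ_iff.mp (hsep3.mono huniv)
  haveI : SecondCountableTopology H := UniformSpace.secondCountable_of_separable H
  haveI : BorelSpace {l : ℝ // 0 < l} := Subtype.borelSpace (Set.Ioi (0:ℝ))
  -- measurable raw data maps
  have mD : ∀ n : ℕ, Measurable fun ω => (fun i : Fin n => S.Z i ω) :=
    fun n => measurable_pi_lambda _ fun i => S.hZmeas i
  have mP : ∀ n : ℕ, Measurable fun ω =>
      ((fun i : Fin n => S.Z i ω), (⟨Lam n ω, hLampos n ω⟩ : {l : ℝ // 0 < l})) :=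
    fun n => (mD n).prodMk ((hLam n).subtype_mk)
  have part1 : ∀ n : ℕ, Measurable fun ω => S.fD n (fun i => S.Z i ω) (Lam n ω) :=
    fun n => ((S.fD_cont n).measurable).comp (mP n)
  have part2 : ∀ (n : ℕ) (i : Fin n), Measurable fun ω =>
      KDinv n (fun i' => S.Z i' ω) (Lam n ω) (S.Φ (S.Z i ω).1) := by
    intro n i
    have hΦZ : Measurable fun ω => S.Φ (S.Z i ω).1 :=
      S.phi_cont.measurable.comp ((S.hZmeas i).fst)
    exact ((S.KDinv_cont n KDinv hKDinv).measurable).comp ((mP n).prodMk hΦZ)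
  refine ⟨part1, part2, ?_⟩
  intro n
  set G : ((Fin n → S.X × S.Y) × {l : ℝ // 0 < l}) × (Fin m → H) → Fin n → Fin m → ℝ :=
    fun q i j =>
      -(S.L' (q.1.1 i).1 (q.1.1 i).2 ⟪S.fD n q.1.1 q.1.2.1, S.Φ (q.1.1 i).1⟫) *
        ⟪q.2 j, KDinv n q.1.1 q.1.2.1 (S.Φ (q.1.1 i).1)⟫ with hGdef
  have hgc : ∀ (i : Fin n) (j : Fin m), Continuous fun q => G q i j := by
    intro i j
    have hΦ : Continuous fun q : ((Fin n → S.X × S.Y) × {l : ℝ // 0 < l}) × (Fin m → H) =>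
        S.Φ (q.1.1 i).1 :=
      S.phi_cont.comp (((continuous_apply i).comp continuous_fst.fst).fst)
    have hfDc : Continuous fun q : ((Fin n → S.X × S.Y) × {l : ℝ // 0 < l}) × (Fin m → H) =>
        S.fD n q.1.1 q.1.2.1 := (S.fD_cont n).comp continuous_fst
    have hKc : Continuous fun q : ((Fin n → S.X × S.Y) × {l : ℝ // 0 < l}) × (Fin m → H) =>
        KDinv n q.1.1 q.1.2.1 (S.Φ (q.1.1 i).1) :=
      (S.KDinv_cont n KDinv hKDinv).comp (continuous_fst.prodMk hΦ)
    have hL'c : Continuous fun q : ((Fin n → S.X × S.Y) × {l : ℝ // 0 < l}) × (Fin m → H) =>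
        S.L' (q.1.1 i).1 (q.1.1 i).2 ⟪S.fD n q.1.1 q.1.2.1, S.Φ (q.1.1 i).1⟫ :=
      S.hL'cont.comp (((continuous_apply i).comp continuous_fst.fst).prodMk (hfDc.inner hΦ))
    exact (hL'c.neg).mul (((continuous_apply j).comp continuous_snd).inner hKc)
  have hSc : Continuous fun q : ((Fin n → S.X × S.Y) × {l : ℝ // 0 < l}) × (Fin m → H) =>
      fun j j' : Fin m => (n : ℝ)⁻¹ * ∑ i : Fin n,
        (G q i j - (n : ℝ)⁻¹ * ∑ i' : Fin n, G q i' j) *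
          (G q i j' - (n : ℝ)⁻¹ * ∑ i' : Fin n, G q i' j') := by
    refine continuous_pi fun j => continuous_pi fun j' => Continuous.mul continuous_const ?_
    refine continuous_finset_sum _ fun i _ => Continuous.mul ?_ ?_
    · exact (hgc i j).sub (continuous_const.mul (continuous_finset_sum _ fun i' _ => hgc i' j))
    · exact (hgc i j').sub (continuous_const.mul (continuous_finset_sum _ fun i' _ => hgc i' j'))
  have hmeas := hSc.measurable.comp ((mP n).prodMk (hψest n))
  exact hmeas
end
end

section
/- Fix a data set D_n = ((x_1,y_1),…,(x_n,y_n)) ∈ (X×Y)^n and λ ∈ (0,∞), and let K_{D_n,λ} : H → H be the invertible continuous linear operator f ↦ 2λf + (1/n)Σᵢ L''(x_i,y_i,f_{D_n,λ}(x_i)) f(x_i) Φ(x_i). Let {Φ(x_{i_1}),…,Φ(x_{i_r})} be a maximal linearly independent subset of {Φ(x_1),…,Φ(x_n)}, let B_{D_n} ∈ ℝ^{r×n} be the matrix of coefficients β_{ji} with Φ(x_i) = Σ_{j=1}^r β_{ji} Φ(x_{i_j}), and let A_{D_n,λ} = 2λ·Id_{n×n} + (1/n)·D·K where D is the diagonal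 matrix with entries L''(x_i,y_i,f_{D_n,λ}(x_i)) and K is the Gram matrix (k(x_i,x_ℓ))_{i,ℓ}. Fix x ∈ X and let w(x) ∈ ℝ^n have entries w_i = −(1/(2nλ))·L''(x_i,y_i,f_{D_n,λ}(x_i))·k(x_i,x). Then: (i) the linear system B_{D_n}A_{D_n,λ}·α = B_{D_n}·w(x) has a solution α ∈ ℝ^n (in particular α = (B_{D_n}A_{D_n,λ})⁻B_{D_n}w(x) with the Moore–Penrose pseudoinverse is a solution); and (ii) for every solution α of this system, K_{D_n,λ}^{-1}(Φ(x)) = (1/(2λ))Φ(x) + Σᵢ αᵢ Φ(x_i). -/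
open MeasureTheory Filter Topology
open scoped RealInnerProductSpace BigOperators

noncomputable section

variable {d : ℕ} {H : Type} [NormedAddCommGroup H] [InnerProductSpace ℝ H] [CompleteSpace H]


-- Auxiliary lemma A: the key algebraic computation for `K` applied to
-- `(2λ)⁻¹ • ξ + ∑ αᵢ • φᵢ`.
lemma auxA {H : Type} [NormedAddCommGroup H] [InnerProductSpace ℝ H]
    (n : ℕ) (hn : (n : ℝ) ≠ 0) (lam : ℝ) (hlam : 2 * lam ≠ 0)
    (φ : Fin n → H) (ξ : H) (c : Fin n → ℝ)
    (Amat : Matrix (Fin n) (Fin n) ℝ)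
    (hA : ∀ i l, Amat i l = (if i = l then 2 * lam else 0)
      + (n : ℝ)⁻¹ * c i * ⟪φ i, φ l⟫)
    (w : Fin n → ℝ)
    (hw : ∀ i, w i = -(1 / (2 * n * lam)) * (c i * ⟪φ i, ξ⟫))
    (α : Fin n → ℝ) :
    (2 * lam) • ((2 * lam)⁻¹ • ξ + ∑ i, α i • φ i) + (n : ℝ)⁻¹ •
      ∑ i, (c i * ⟪(2 * lam)⁻¹ • ξ + ∑ l, α l • φ l, φ i⟫) • φ i
      = ξ + ∑ i, (Amat.mulVec α i - w i) • φ i := by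
  have hin : ∀ i : Fin n, ⟪(2 * lam)⁻¹ • ξ + ∑ l, α l • φ l, φ i⟫
      = (2 * lam)⁻¹ * ⟪φ i, ξ⟫ + ∑ l, α l * ⟪φ i, φ l⟫ := by
    intro i
    rw [inner_add_left, sum_inner, real_inner_smul_left, real_inner_comm]
    congr 1
    refine Finset.sum_congr rfl fun l _ => ?_
    rw [real_inner_smul_left, real_inner_comm]
  have hAv : ∀ i : Fin n, Amat.mulVec α i
      = 2 * lam * α i + (n : ℝ)⁻¹ * c i * ∑ l, ⟪φ i, φ l⟫ * α l := by
    intro i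
    simp only [Matrix.mulVec, dotProduct, hA, add_mul, Finset.sum_add_distrib,
      ite_mul, zero_mul, Finset.sum_ite_eq, Finset.mem_univ, if_pos, Finset.mul_sum]
    congr 1
    exact Finset.sum_congr rfl fun l _ => by ring
  have e1 : (2 * lam) • ((2 * lam)⁻¹ • ξ + ∑ i, α i • φ i)
      = ξ + ∑ i, (2 * lam * α i) • φ i := by
    rw [smul_add, smul_smul, mul_inv_cancel₀ hlam, one_smul, Finset.smul_sum]
    exact congrArg (ξ + ·) (Finset.sum_congr rfl fun i _ => by rw [smul_smul])
  rw [e1, add_assoc]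
  congr 1
  rw [Finset.smul_sum, ← Finset.sum_add_distrib]
  refine Finset.sum_congr rfl fun i _ => ?_
  rw [smul_smul, ← add_smul]
  congr 1
  rw [hin i, hAv i, hw i]
  have hS : ∑ l, α l * ⟪φ i, φ l⟫ = ∑ l, ⟪φ i, φ l⟫ * α l :=
    Finset.sum_congr rfl fun l _ => mul_comm _ _
  rw [hS]
  have hlam0 : lam ≠ 0 := by intro h; exact hlam (by rw [h]; ring)
  field_simp
  ring

-- Auxiliary lemma B: vanishing of `∑ uᵢ • φᵢ` is equivalent to `B u = 0`.
lemma auxB {H : Type} [NormedAddCommGroup H] [InnerProductSpace ℝ H]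
    (n ρ : ℕ) (φ : Fin n → H) (idx : Fin ρ → Fin n)
    (hli : LinearIndependent ℝ fun j : Fin ρ => φ (idx j))
    (β : Fin ρ → Fin n → ℝ) (hβ : ∀ i, φ i = ∑ j, β j i • φ (idx j))
    (Bmat : Matrix (Fin ρ) (Fin n) ℝ) (hB : ∀ j i, Bmat j i = β j i)
    (u : Fin n → ℝ) : ∑ i, u i • φ i = 0 ↔ Bmat.mulVec u = 0 := by
  have hrw : ∑ i, u i • φ i = ∑ j, (Bmat.mulVec u j) • φ (idx j) := by
    calc ∑ i, u i • φ i = ∑ i, ∑ j, (u i * β j i) • φ (idx j) := by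
          refine Finset.sum_congr rfl fun i _ => ?_
          rw [hβ i, Finset.smul_sum]
          exact Finset.sum_congr rfl fun j _ => by rw [smul_smul]
      _ = ∑ j, ∑ i, (u i * β j i) • φ (idx j) := Finset.sum_comm
      _ = ∑ j, (Bmat.mulVec u j) • φ (idx j) := by
          refine Finset.sum_congr rfl fun j _ => ?_
          rw [← Finset.sum_smul]
          congr 1
          simp only [Matrix.mulVec, dotProduct, hB]
          exact Finset.sum_congr rfl fun i _ => mul_comm _ _
  constructor
  · intro h
    funext j
    exact Fintype.linearIndependent_iff.mp hli (fun j => Bmat.mulVec u j)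
      (by rw [← hrw]; exact h) j
  · intro h
    rw [hrw, h]
    simp

-- Auxiliary lemma C: existence of a representation of a preimage under `K`.
lemma auxC {H : Type} [NormedAddCommGroup H] [InnerProductSpace ℝ H]
    (n : ℕ) (lam : ℝ) (hlam : 2 * lam ≠ 0)
    (φ : Fin n → H) (ξ : H) (c : Fin n → ℝ)
    (K : H → H)
    (hK : ∀ f, K f = (2 * lam) • f + (n : ℝ)⁻¹ • ∑ i, (c i * ⟪f, φ i⟫) • φ i)
    (hKinj : Function.Injective K) :
    ∃ α : Fin n → ℝ, K ((2 * lam)⁻¹ • ξ + ∑ i, α i • φ i) = ξ := by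
  classical
  let Klin : H →ₗ[ℝ] H :=
    { toFun := fun f => (2 * lam) • f + (n : ℝ)⁻¹ • ∑ i, (c i * ⟪f, φ i⟫) • φ i
      map_add' := by
        intro f g
        have hsum : ∀ i : Fin n, (c i * ⟪f + g, φ i⟫) • φ i
            = (c i * ⟪f, φ i⟫) • φ i + (c i * ⟪g, φ i⟫) • φ i := by
          intro i
          rw [inner_add_left, mul_add, add_smul]
        rw [Finset.sum_congr rfl fun i _ => hsum i, Finset.sum_add_distrib,
          smul_add, smul_add]
        abel
      map_smul' := by
        intro r f
        have hsum : ∑ i, (c i * ⟪r • f, φ i⟫) • φ i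
            = r • ∑ i, (c i * ⟪f, φ i⟫) • φ i := by
          rw [Finset.smul_sum]
          refine Finset.sum_congr rfl fun i _ => ?_
          rw [real_inner_smul_left, smul_smul, mul_left_comm]
        rw [hsum, RingHom.id_apply, smul_add, smul_comm r (2 * lam),
          smul_comm r ((n : ℝ)⁻¹)] }
  have hKlin : ∀ f, K f = Klin f := fun f => by rw [hK]; rfl
  have hKlininj : Function.Injective Klin := by
    intro f g hfg
    exact hKinj (by rw [hKlin, hKlin, hfg])
  let V : Submodule ℝ H := Submodule.span ℝ (insert ξ (Set.range φ))
  haveI : FiniteDimensional ℝ V :=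
    FiniteDimensional.span_of_finite ℝ ((Set.finite_range φ).insert _)
  have hφV : ∀ i, φ i ∈ V := fun i =>
    Submodule.subset_span (Set.mem_insert_of_mem _ ⟨i, rfl⟩)
  have hxV : ξ ∈ V := Submodule.subset_span (Set.mem_insert _ _)
  have hmap : ∀ v ∈ V, Klin v ∈ V := by
    intro v hv
    refine Submodule.add_mem _ (Submodule.smul_mem _ _ hv) (Submodule.smul_mem _ _ ?_)
    exact Submodule.sum_mem _ fun i _ => Submodule.smul_mem _ _ (hφV i)
  have hres_surj : Function.Surjective (Klin.restrict hmap) :=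
    LinearMap.injective_iff_surjective.mp
      (fun a b hab => Subtype.ext (hKlininj (congrArg Subtype.val hab)))
  obtain ⟨v, hv⟩ := hres_surj ⟨ξ, hxV⟩
  have hvK : Klin (v : H) = ξ := congrArg Subtype.val hv
  have hvmem : (v : H) ∈ Submodule.span ℝ (insert ξ (Set.range φ)) := v.2
  rw [Submodule.mem_span_insert] at hvmem
  obtain ⟨a, z, hz, hvz⟩ := hvmem
  obtain ⟨b, hb⟩ := (Submodule.mem_span_range_iff_exists_fun ℝ).mp hz
  by_cases hmem : ξ ∈ Submodule.span ℝ (Set.range φ)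
  · obtain ⟨γ, hγ⟩ := (Submodule.mem_span_range_iff_exists_fun ℝ).mp hmem
    refine ⟨fun i => b i + (a - (2 * lam)⁻¹) * γ i, ?_⟩
    have hexpr : (2 * lam)⁻¹ • ξ + ∑ i, (b i + (a - (2 * lam)⁻¹) * γ i) • φ i
        = (v : H) := by
      have h1 : ∑ i, (b i + (a - (2 * lam)⁻¹) * γ i) • φ i
          = (∑ i, b i • φ i) + ∑ i, ((a - (2 * lam)⁻¹) * γ i) • φ i := by
        rw [← Finset.sum_add_distrib]
        exact Finset.sum_congr rfl fun i _ => by rw [add_smul]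
      have h2 : ∑ i, ((a - (2 * lam)⁻¹) * γ i) • φ i = (a - (2 * lam)⁻¹) • ξ := by
        rw [← hγ, Finset.smul_sum]
        exact Finset.sum_congr rfl fun i _ => (mul_smul _ _ _)
      rw [h1, h2, hb, hvz, sub_smul]
      abel
    rw [hexpr, hKlin, hvK]
  · have ha : a = (2 * lam)⁻¹ := by
      by_contra hne
      apply hmem
      have hveq : Klin (v : H)
          = (2 * lam * a) • ξ + ((2 * lam) • z
            + (n : ℝ)⁻¹ • ∑ i, (c i * ⟪(v : H), φ i⟫) • φ i) := by
        show (2 * lam) • (v : H) + _ = _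
        rw [hvz, smul_add, smul_smul]
        abel
      have hrest : (2 * lam) • z
          + (n : ℝ)⁻¹ • ∑ i, (c i * ⟪(v : H), φ i⟫) • φ i
          ∈ Submodule.span ℝ (Set.range φ) := by
        refine Submodule.add_mem _ (Submodule.smul_mem _ _ hz)
          (Submodule.smul_mem _ _ ?_)
        exact Submodule.sum_mem _ fun i _ =>
          Submodule.smul_mem _ _ (Submodule.subset_span ⟨i, rfl⟩)
      have hcoef : (1 - 2 * lam * a) ≠ 0 := by
        intro h0
        apply hne
        have : 2 * lam * a = 1 := by linarith
        field_simp
        rw [eq_div_iff (by intro h; apply hlam; rw [h]; ring)]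
        linarith
      have hξeq : (1 - 2 * lam * a) • ξ = (2 * lam) • z
          + (n : ℝ)⁻¹ • ∑ i, (c i * ⟪(v : H), φ i⟫) • φ i := by
        rw [sub_smul, one_smul]
        nth_rewrite 1 [← hvK]
        rw [hveq]
        abel
      have hξeq2 : ξ = (1 - 2 * lam * a)⁻¹ • ((2 * lam) • z
          + (n : ℝ)⁻¹ • ∑ i, (c i * ⟪(v : H), φ i⟫) • φ i) := by
        rw [← hξeq, inv_smul_smul₀ hcoef]
      rw [hξeq2]
      exact Submodule.smul_mem _ _ hrest
    refine ⟨b, ?_⟩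
    have hexpr : (2 * lam)⁻¹ • ξ + ∑ i, b i • φ i = (v : H) := by
      rw [hb, hvz, ha]
    rw [hexpr, hKlin, hvK]

/-- Proposition: computation of `K_{D_n,λ}^{-1}(Φ(x))`.
With `B_{D_n}` the coefficient matrix of the data features w.r.t. a maximal linearly
independent subset `Φ(x_{i₁}), …, Φ(x_{i_ρ})`, `A_{D_n,λ} = 2λ Id + (1/n) L''_{D_n,λ} K_gram`,
and `w(x)ᵢ = −(1/(2nλ)) L''(xᵢ,yᵢ,f_{D_n,λ}(xᵢ)) k(xᵢ,x)`:  the linear system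
`B A α = B w(x)` is solvable — in particular `α = (BA)⁻ B w(x)` with `(BA)⁻` the Moore–Penrose
pseudoinverse (characterized by the four Penrose conditions) is a solution — and every
solution `α` satisfies `K_{D_n,λ}^{-1}(Φ(x)) = (1/(2λ)) Φ(x) + ∑ᵢ αᵢ Φ(xᵢ)`. -/
theorem computation_of_Kinv_feature
    (X : Set (EuclideanSpace ℝ (Fin d))) (Y : Set ℝ)
    (hXclosed : IsClosed X) (hXbdd : Bornology.IsBounded X) (hYclosed : IsClosed Y)
    (r : ℕ) (hr : (d : ℝ) / 2 < r)
    (ktilde : EuclideanSpace ℝ (Fin d) → EuclideanSpace ℝ (Fin d) → ℝ)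
    (hksmooth : ContDiff ℝ r (Function.uncurry ktilde))
    (hkne : ∃ x x' : X, ktilde x x' ≠ 0)
    (Φ : X → H) (hfeature : ∀ x x' : X, ktilde x x' = ⟪Φ x, Φ x'⟫)
    (hgen : (Submodule.span ℝ (Set.range Φ)).topologicalClosure = ⊤)
    (L : X → Y → ℝ → ℝ) (hLnonneg : ∀ x y t, 0 ≤ L x y t)
    (hLconvex : ∀ x y, ConvexOn ℝ Set.univ (L x y))
    (L' L'' : X → Y → ℝ → ℝ)
    (hL' : ∀ x y t, HasDerivAt (L x y) (L' x y t) t)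
    (hL'' : ∀ x y t, HasDerivAt (L' x y) (L'' x y t) t)
    (hL'cont : Continuous fun q : (X × Y) × ℝ => L' q.1.1 q.1.2 q.2)
    (hL''cont : Continuous fun q : (X × Y) × ℝ => L'' q.1.1 q.1.2 q.2)
    (n : ℕ) (hn : 0 < n) (D : Fin n → X × Y) (lam : ℝ) (hlam : 0 < lam)
    -- `fDl` is the unique minimizer of the regularized empirical risk
    (fDl : H)
    (hfDlmin : ∀ g : H,
      ((n : ℝ)⁻¹ * ∑ i, L (D i).1 (D i).2 ⟪fDl, Φ (D i).1⟫) + lam * ‖fDl‖ ^ 2 ≤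
      ((n : ℝ)⁻¹ * ∑ i, L (D i).1 (D i).2 ⟪g, Φ (D i).1⟫) + lam * ‖g‖ ^ 2)
    (hfDluniq : ∀ g : H,
      ((n : ℝ)⁻¹ * ∑ i, L (D i).1 (D i).2 ⟪g, Φ (D i).1⟫) + lam * ‖g‖ ^ 2 ≤
      ((n : ℝ)⁻¹ * ∑ i, L (D i).1 (D i).2 ⟪fDl, Φ (D i).1⟫) + lam * ‖fDl‖ ^ 2 → g = fDl)
    -- the invertible continuous linear operator `K_{D_n,λ}` and its inverse
    (K Kinv : H → H)
    (hK : ∀ f : H, K f = (2 * lam) • f + (n : ℝ)⁻¹ •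
      ∑ i, (L'' (D i).1 (D i).2 ⟪fDl, Φ (D i).1⟫ * ⟪f, Φ (D i).1⟫) • Φ (D i).1)
    (hKinv₁ : ∀ f : H, Kinv (K f) = f) (hKinv₂ : ∀ f : H, K (Kinv f) = f)
    -- a maximal linearly independent subset `Φ(x_{i₁}), …, Φ(x_{i_ρ})` of the features
    (ρ : ℕ) (idx : Fin ρ → Fin n)
    (hli : LinearIndependent ℝ fun j : Fin ρ => Φ (D (idx j)).1)
    -- the coefficients `β` expressing every feature in this basis, and the matrix `B_{D_n}`
    (β : Fin ρ → Fin n → ℝ)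
    (hβ : ∀ i : Fin n, Φ (D i).1 = ∑ j, β j i • Φ (D (idx j)).1)
    (Bmat : Matrix (Fin ρ) (Fin n) ℝ) (hB : Bmat = Matrix.of β)
    -- the matrix `A_{D_n,λ} = 2λ Id + (1/n) L''_{D_n,λ} ⬝ (k(xᵢ,xₗ))`
    (Amat : Matrix (Fin n) (Fin n) ℝ)
    (hA : ∀ i l : Fin n, Amat i l = (if i = l then 2 * lam else 0) +
      (n : ℝ)⁻¹ * L'' (D i).1 (D i).2 ⟪fDl, Φ (D i).1⟫ * ktilde (D i).1 (D l).1)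
    (x : X)
    -- the right-hand side `w(x)`
    (w : Fin n → ℝ)
    (hw : ∀ i : Fin n, w i = -(1 / (2 * n * lam)) *
      (L'' (D i).1 (D i).2 ⟪fDl, Φ (D i).1⟫ * ktilde (D i).1 x))
    -- a Moore–Penrose pseudoinverse `(B A)⁻` of `B A`
    (pinv : Matrix (Fin n) (Fin ρ) ℝ)
    (hp₁ : Bmat * Amat * pinv * (Bmat * Amat) = Bmat * Amat)
    (hp₂ : pinv * (Bmat * Amat) * pinv = pinv)
    (hp₃ : (Bmat * Amat * pinv).transpose = Bmat * Amat * pinv)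
    (hp₄ : (pinv * (Bmat * Amat)).transpose = pinv * (Bmat * Amat)) :
    -- (i) `α = (BA)⁻ B w(x)` solves the linear system `B A α = B w(x)`
    (Bmat * Amat).mulVec (pinv.mulVec (Bmat.mulVec w)) = Bmat.mulVec w ∧
    -- (ii) every solution `α` of the system yields `K⁻¹(Φ(x)) = (1/(2λ)) Φ(x) + ∑ᵢ αᵢ Φ(xᵢ)`
    ∀ α : Fin n → ℝ, (Bmat * Amat).mulVec α = Bmat.mulVec w →
      Kinv (Φ x) = (2 * lam)⁻¹ • Φ x + ∑ i, α i • Φ (D i).1 := by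
    classical
  have hn' : (n : ℝ) ≠ 0 := Nat.cast_ne_zero.mpr hn.ne'
  have hlam' : (2 : ℝ) * lam ≠ 0 := by positivity
  set φ : Fin n → H := fun i => Φ (D i).1 with hφ
  set c : Fin n → ℝ := fun i => L'' (D i).1 (D i).2 ⟪fDl, Φ (D i).1⟫ with hc
  -- translate the hypotheses into the abstract form
  have hA' : ∀ i l, Amat i l = (if i = l then 2 * lam else 0)
      + (n : ℝ)⁻¹ * c i * ⟪φ i, φ l⟫ := by
    intro i l
    rw [hA i l, ← hfeature]
  have hw' : ∀ i, w i = -(1 / (2 * n * lam)) * (c i * ⟪φ i, Φ x⟫) := by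
    intro i
    rw [hw i, ← hfeature]
  have hK' : ∀ f, K f = (2 * lam) • f + (n : ℝ)⁻¹ • ∑ i, (c i * ⟪f, φ i⟫) • φ i :=
    fun f => hK f
  -- Lemma A specialized
  have lemA : ∀ α : Fin n → ℝ,
      K ((2 * lam)⁻¹ • Φ x + ∑ i, α i • φ i)
        = Φ x + ∑ i, (Amat.mulVec α i - w i) • φ i := by
    intro α
    rw [hK']
    exact auxA n hn' lam hlam' φ (Φ x) c Amat hA' w hw' α
  -- Lemma B specialized
  have lemB : ∀ u : Fin n → ℝ, (∑ i, u i • φ i = 0 ↔ Bmat.mulVec u = 0) :=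
    auxB n ρ φ idx hli β hβ Bmat (fun j i => by rw [hB]; rfl)
  -- K is injective
  have hKinj : Function.Injective K := by
    intro f g hfg
    calc f = Kinv (K f) := (hKinv₁ f).symm
      _ = Kinv (K g) := by rw [hfg]
      _ = g := hKinv₁ g
  -- existence of a solution
  obtain ⟨α₀, hα₀⟩ := auxC n lam hlam' φ (Φ x) c K hK' hKinj
  have h0 : ∑ i, (Amat.mulVec α₀ i - w i) • φ i = 0 := by
    have h := lemA α₀
    rw [hα₀] at h
    exact (left_eq_add.mp h)
  have hsol₀ : (Bmat * Amat).mulVec α₀ = Bmat.mulVec w := by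
    have hB0 : Bmat.mulVec (fun i => Amat.mulVec α₀ i - w i) = 0 := (lemB _).mp h0
    have hB1 : Bmat.mulVec (Amat.mulVec α₀ - w) = 0 := hB0
    rw [Matrix.mulVec_sub, sub_eq_zero, Matrix.mulVec_mulVec] at hB1
    exact hB1
  constructor
  · rw [← hsol₀, Matrix.mulVec_mulVec, Matrix.mulVec_mulVec, hp₁]
  · intro α hα
    have h0' : ∑ i, (Amat.mulVec α i - w i) • φ i = 0 := by
      apply (lemB _).mpr
      show Bmat.mulVec (Amat.mulVec α - w) = 0
      rw [Matrix.mulVec_sub, sub_eq_zero, Matrix.mulVec_mulVec]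
      exact hα
    have h := lemA α
    rw [h0', add_zero] at h
    calc Kinv (Φ x) = Kinv (K ((2 * lam)⁻¹ • Φ x + ∑ i, α i • φ i)) := by rw [h]
      _ = (2 * lam)⁻¹ • Φ x + ∑ i, α i • φ i := hKinv₁ _
end
end

section
/- Let K_P : H → H be the operator f ↦ 2λ_0 f + ∫ L''(x,y,f_{P,λ_0}(x)) f(x) Φ(x) P(d(x,y)) (Bochner integral), which is an invertible continuous linear operator. Then, for every f ∈ H: f(x) = 0 for P_X-almost every x ∈ X if and only if (K_P^{-1}(f))(x) = 0 for P_X-almost every x ∈ X. -/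
open MeasureTheory ProbabilityTheory Filter Topology
open scoped RealInnerProductSpace NNReal ENNReal BigOperators

noncomputable section

variable {d : ℕ} {H : Type} [NormedAddCommGroup H] [InnerProductSpace ℝ H] [CompleteSpace H]
  {Ω : Type} [MeasurableSpace Ω]

private lemma aux_monotone_hasDerivAt_nonneg {φ : ℝ → ℝ} {m t : ℝ}
    (hφ : Monotone φ) (h : HasDerivAt φ m t) : 0 ≤ m := by
  have h' := hasDerivAt_iff_tendsto_slope.mp h
  refine ge_of_tendsto h' ?_
  filter_upwards [self_mem_nhdsWithin] with x hx
  rcases lt_or_gt_of_ne (hx : x ≠ t) with hlt | hgt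
  · have h1 : φ x ≤ φ t := hφ hlt.le
    rw [slope_def_field]
    rw [← neg_div_neg_eq]
    exact div_nonneg (by linarith) (by linarith)
  · have h1 : φ t ≤ φ x := hφ hgt.le
    rw [slope_def_field]
    exact div_nonneg (by linarith) (by linarith)

/-- the operator `K_P⁻¹` preserves `P_X`-a.e. vanishing.
Let `K_P : H → H` be the invertible continuous linear operator
`f ↦ 2λ₀ f + ∫ L''(x,y,f_{P,λ₀}(x)) f(x) Φ(x) P(d(x,y))`.  Then, for every `f ∈ H`:
`f = 0` `P_X`-a.s. if and only if `K_P⁻¹(f) = 0` `P_X`-a.s. -/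
theorem KPinv_preserves_ae_zero
    (S : RegKernelSetting d H Ω) (lam0 : ℝ) (hlam0 : 0 < lam0)
    (KP KPinv : H →L[ℝ] H)
    (hKP : ∀ f : H, KP f = (2 * lam0) • f +
      ∫ (z : S.X × S.Y), (S.L'' z.1 z.2 ⟪S.fP lam0, S.Φ z.1⟫ * ⟪f, S.Φ z.1⟫) • S.Φ z.1 ∂S.P)
    (hKPinv₁ : ∀ f : H, KPinv (KP f) = f) (hKPinv₂ : ∀ f : H, KP (KPinv f) = f) :
    ∀ f : H, (∀ᵐ x ∂S.P.fst, ⟪f, S.Φ x⟫ = 0) ↔ ∀ᵐ x ∂S.P.fst, ⟪KPinv f, S.Φ x⟫ = 0 := by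
  haveI := S.hP
  -- `X` is compact
  haveI hXcpt : CompactSpace S.X := isCompact_iff_compactSpace.mp
    (Metric.isCompact_of_isClosed_isBounded S.hXclosed S.hXbdd)
  -- the kernel is continuous on `X × X`
  have hk : Continuous fun p : S.X × S.X => S.ktilde p.1 p.2 := by
    have h1 : Continuous (Function.uncurry S.ktilde) := S.hksmooth.continuous
    exact h1.comp ((continuous_subtype_val.comp continuous_fst).prodMk
      (continuous_subtype_val.comp continuous_snd))
  -- the feature map is continuous
  have hΦ : Continuous S.Φ := by
    rw [continuous_iff_continuousAt]
    intro x₀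
    have hsq : Tendsto (fun x => ‖S.Φ x - S.Φ x₀‖ ^ 2) (𝓝 x₀) (𝓝 0) := by
      have heq : ∀ x, ‖S.Φ x - S.Φ x₀‖ ^ 2 =
          S.ktilde x x - S.ktilde x x₀ - S.ktilde x₀ x + S.ktilde x₀ x₀ := by
        intro x
        rw [← real_inner_self_eq_norm_sq, inner_sub_sub_self,
          ← S.hfeature x x, ← S.hfeature x x₀, ← S.hfeature x₀ x, ← S.hfeature x₀ x₀]
      have hc : Continuous fun x : S.X =>
          S.ktilde x x - S.ktilde x x₀ - S.ktilde x₀ x + S.ktilde x₀ x₀ := by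
        have h1 := hk.comp (Continuous.prodMk continuous_id continuous_id : Continuous fun x : S.X => (x, x))
        have h2 := hk.comp ((continuous_id.prodMk continuous_const) : Continuous fun x : S.X => (x, x₀))
        have h3 := hk.comp ((continuous_const.prodMk continuous_id) : Continuous fun x : S.X => (x₀, x))
        exact ((h1.sub h2).sub h3).add continuous_const
      have h0 : (fun x : S.X =>
          S.ktilde x x - S.ktilde x x₀ - S.ktilde x₀ x + S.ktilde x₀ x₀) x₀ = 0 := by ring
      simpa only [heq] using h0 ▸ hc.continuousAt.tendsto
    have hn : Tendsto (fun x => ‖S.Φ x - S.Φ x₀‖) (𝓝 x₀) (𝓝 0) := by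
      have h1 := (Real.continuous_sqrt.tendsto 0).comp hsq
      rw [Real.sqrt_zero] at h1
      exact h1.congr fun x => by simp [Real.sqrt_sq (norm_nonneg _)]
    rw [ContinuousAt, tendsto_iff_norm_sub_tendsto_zero]
    exact hn
  -- a uniform bound on the feature map
  obtain ⟨x₁, -, hkx⟩ := S.hkne
  haveI : Nonempty S.X := ⟨x₁⟩
  obtain ⟨xm, -, hxm⟩ := isCompact_univ.exists_isMaxOn Set.univ_nonempty
    (hΦ.norm.continuousOn)
  set C : ℝ := ‖S.Φ xm‖ with hCdef
  have hC : ∀ x : S.X, ‖S.Φ x‖ ≤ C := fun x => hxm (Set.mem_univ x)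
  have hC0 : 0 ≤ C := (norm_nonneg _).trans (hC x₁)
  -- the second-derivative coefficient
  set c : S.X × S.Y → ℝ := fun z => S.L'' z.1 z.2 ⟪S.fP lam0, S.Φ z.1⟫ with hcdef
  have hccont : Continuous c := by
    rw [hcdef]
    exact S.hL''cont.comp' (continuous_id.prodMk (continuous_const.inner (hΦ.comp continuous_fst)))
  -- the coefficient is nonnegative (convexity of the loss)
  have hcpos : ∀ z : S.X × S.Y, 0 ≤ c z := by
    intro z
    have hmono : Monotone (S.L' z.1 z.2) := by
      intro s t hst
      rcases eq_or_lt_of_le hst with rfl | hlt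
      · exact le_refl _
      · have h1 := (S.hLconvex z.1 z.2).le_slope_of_hasDerivAt (Set.mem_univ s)
          (Set.mem_univ t) hlt (S.hL' z.1 z.2 s)
        have h2 := (S.hLconvex z.1 z.2).slope_le_of_hasDerivAt (Set.mem_univ s)
          (Set.mem_univ t) hlt (S.hL' z.1 z.2 t)
        exact h1.trans h2
    exact aux_monotone_hasDerivAt_nonneg hmono (S.hL'' z.1 z.2 _)
  -- bound the coefficient
  set a : ℝ := ‖S.fP lam0‖ * C + 1 with hadef
  have ha0 : 0 < a := by positivity
  have hcbd : ∀ z : S.X × S.Y, |c z| ≤ S.b'' a := by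
    intro z
    apply S.hb''bound a ha0
    calc |⟪S.fP lam0, S.Φ z.1⟫| ≤ ‖S.fP lam0‖ * ‖S.Φ z.1‖ := abs_real_inner_le_norm _ _
      _ ≤ ‖S.fP lam0‖ * C + 1 := by nlinarith [hC z.1, norm_nonneg (S.fP lam0)]
  -- integrability of the integrand, for any `v`
  have hFint : ∀ v : H,
      Integrable (fun z : S.X × S.Y => (c z * ⟪v, S.Φ z.1⟫) • S.Φ z.1) S.P := by
    intro v
    have hinner : Continuous fun z : S.X × S.Y => ⟪v, S.Φ z.1⟫ :=
      continuous_const.inner (hΦ.comp continuous_fst)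
    have hcont : Continuous fun z : S.X × S.Y => (c z * ⟪v, S.Φ z.1⟫) • S.Φ z.1 :=
      (hccont.mul hinner).smul (hΦ.comp continuous_fst)
    refine Integrable.mono' (integrable_const (S.b'' a * (‖v‖ * C) * C))
      hcont.aestronglyMeasurable (ae_of_all _ fun z => ?_)
    have h1 : ‖(c z * ⟪v, S.Φ z.1⟫) • S.Φ z.1‖ = |c z * ⟪v, S.Φ z.1⟫| * ‖S.Φ z.1‖ := by
      rw [norm_smul, Real.norm_eq_abs]
    rw [h1, abs_mul]
    have h2 : |⟪v, S.Φ z.1⟫| ≤ ‖v‖ * C := by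
      calc |⟪v, S.Φ z.1⟫| ≤ ‖v‖ * ‖S.Φ z.1‖ := abs_real_inner_le_norm _ _
        _ ≤ ‖v‖ * C := by nlinarith [hC z.1, norm_nonneg v]
    have h3 := hcbd z
    have h4 := hC z.1
    have h5 : (0:ℝ) ≤ |c z| := abs_nonneg _
    have h6 : (0:ℝ) ≤ |⟪v, S.Φ z.1⟫| := abs_nonneg _
    have h7 : (0:ℝ) ≤ ‖S.Φ z.1‖ := norm_nonneg _
    have hb0 : (0:ℝ) ≤ S.b'' a := h5.trans h3
    have hv0 : (0:ℝ) ≤ ‖v‖ * C := mul_nonneg (norm_nonneg v) hC0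
    have h8 : |c z| * |⟪v, S.Φ z.1⟫| * ‖S.Φ z.1‖ ≤ S.b'' a * (‖v‖ * C) * C :=
      mul_le_mul (mul_le_mul h3 h2 h6 hb0) h4 h7 (mul_nonneg hb0 hv0)
    exact h8
  -- swapping inner product and integral
  have hswap : ∀ v w : H,
      ⟪w, ∫ z : S.X × S.Y, (c z * ⟪v, S.Φ z.1⟫) • S.Φ z.1 ∂S.P⟫ =
      ∫ z : S.X × S.Y, (c z * ⟪v, S.Φ z.1⟫) * ⟪w, S.Φ z.1⟫ ∂S.P := by
    intro v w
    rw [← integral_inner (hFint v) w]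
    congr 1
    funext z
    rw [real_inner_smul_right]
  -- transferring a.e. statements between `P.fst` and `P`
  have hae : ∀ v : H, (∀ᵐ x ∂S.P.fst, ⟪v, S.Φ x⟫ = 0) ↔
      ∀ᵐ z : S.X × S.Y ∂S.P, ⟪v, S.Φ z.1⟫ = 0 := by
    intro v
    have hmeas : MeasurableSet {x : S.X | ⟪v, S.Φ x⟫ = 0} :=
      (isClosed_eq (continuous_const.inner hΦ) continuous_const).measurableSet
    rw [show S.P.fst = S.P.map Prod.fst from rfl,
      ae_map_iff measurable_fst.aemeasurable hmeas]
  intro f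
  set g := KPinv f with hgdef
  set T : H := ∫ z : S.X × S.Y, (c z * ⟪g, S.Φ z.1⟫) • S.Φ z.1 ∂S.P with hTdef
  have hfg : f = (2 * lam0) • g + T := by
    conv_lhs => rw [← hKPinv₂ f, hKP]
  constructor
  · intro hf
    have hfz : ∀ᵐ z : S.X × S.Y ∂S.P, ⟪f, S.Φ z.1⟫ = 0 := (hae f).mp hf
    have hfT : ⟪f, T⟫ = 0 := by
      rw [hTdef, hswap g f]
      apply integral_eq_zero_of_ae
      filter_upwards [hfz] with z hz
      simp [hz]
    have hgT : 0 ≤ ⟪g, T⟫ := by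
      rw [hTdef, hswap g g]
      apply integral_nonneg
      intro z
      simp only [Pi.zero_apply]
      have := hcpos z
      nlinarith [sq_nonneg (⟪g, S.Φ z.1⟫ : ℝ)]
    have hT0 : T = 0 := by
      have h1 : ⟪f, T⟫ = 2 * lam0 * ⟪g, T⟫ + ‖T‖ ^ 2 := by
        rw [hfg, inner_add_left, real_inner_smul_left, real_inner_self_eq_norm_sq]
      have h2 : ‖T‖ = 0 := by nlinarith [norm_nonneg T]
      exact norm_eq_zero.mp h2
    have hfeq : f = (2 * lam0) • g := by rw [hfg, hT0, add_zero]
    filter_upwards [hf] with x hx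
    have h3 : ⟪f, S.Φ x⟫ = 2 * lam0 * ⟪g, S.Φ x⟫ := by
      rw [hfeq, real_inner_smul_left]
    rw [h3] at hx
    nlinarith [hx]
  · intro hg
    have hgz : ∀ᵐ z : S.X × S.Y ∂S.P, ⟪g, S.Φ z.1⟫ = 0 := (hae g).mp hg
    have hT0 : T = 0 := by
      rw [hTdef]
      apply integral_eq_zero_of_ae
      filter_upwards [hgz] with z hz
      simp [hz]
    filter_upwards [hg] with x hx
    rw [hfg, hT0, add_zero, real_inner_smul_left, hx, mul_zero]
end
end
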